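/- Let h : [0,1] → [0,1] be differentiable and increasing with h(0)=0 and h(1)=1, and define H(p) = p h'(p)/h(p) for p ∈ (0,1). Then the following are equivalent: (a) p H'(p)/H(p) is decreasing on (0,1); (b) for every fixed q ∈ (0,1), the function p ↦ H(p/q)/H(p) is decreasing on (0,q). (This characterizes when a used coherent system ages faster in the hazard rate than the coherent system of used components.) -/

import Mathlib

open Set Filter

/-- If `f` is antitone on an open interval and has a derivative at an interior
point, the derivative is nonpositive. -/
lemma antitoneOn_Ioo_deriv_nonpos {f : ℝ → ℝ} {a b x d : ℝ}
    (hf : AntitoneOn f (Set.Ioo a b)) (hx : x ∈ Set.Ioo a b)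
    (hd : HasDerivAt f d x) : d ≤ 0 := by
  have hxb : x < b := hx.2
  have hsub : Set.Ioo x b ⊆ {x}ᶜ := fun y hy => ne_of_gt hy.1
  have htend : Filter.Tendsto (slope f x) (nhdsWithin x (Set.Ioo x b)) (nhds d) :=
    (hasDerivAt_iff_tendsto_slope.mp hd).mono_left (nhdsWithin_mono x hsub)
  have : (nhdsWithin x (Set.Ioo x b)).NeBot := left_nhdsWithin_Ioo_neBot hxb
  refine le_of_tendsto htend ?_
  filter_upwards [self_mem_nhdsWithin] with y hy
  have hy' : y ∈ Set.Ioo a b := ⟨lt_trans hx.1 hy.1, hy.2⟩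
  have hle : f y ≤ f x := hf hx hy' (le_of_lt hy.1)
  rw [slope_def_field]
  exact div_nonpos_of_nonpos_of_nonneg (by linarith) (by linarith [hy.1])

theorem used_system_aging_faster_iff (h h' H H' : ℝ → ℝ)
    (hdiff : ∀ p ∈ Set.Icc (0 : ℝ) 1, HasDerivAt h (h' p) p)
    (hpos : ∀ p ∈ Set.Ioo (0 : ℝ) 1, 0 < h' p)
    (hmono : MonotoneOn h (Set.Icc (0 : ℝ) 1))
    (hmaps : ∀ p ∈ Set.Icc (0 : ℝ) 1, h p ∈ Set.Icc (0 : ℝ) 1)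
    (h0 : h 0 = 0) (h1 : h 1 = 1)
    (hH : ∀ p ∈ Set.Ioo (0 : ℝ) 1, H p = p * h' p / h p)
    (hHpos : ∀ p ∈ Set.Ioo (0 : ℝ) 1, 0 < H p)
    (hHdiff : ∀ p ∈ Set.Ioo (0 : ℝ) 1, HasDerivAt H (H' p) p) :
    AntitoneOn (fun p => p * H' p / H p) (Set.Ioo (0 : ℝ) 1) ↔
      ∀ q ∈ Set.Ioo (0 : ℝ) 1,
        AntitoneOn (fun p => H (p / q) / H p) (Set.Ioo 0 q) := by
  constructor
  · -- (a) → (b)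
    intro hG q hq
    obtain ⟨hq0, hq1⟩ := hq
    -- derivative of p ↦ H (p/q) / H p on Ioo 0 q
    have key : ∀ x ∈ Set.Ioo (0:ℝ) q,
        HasDerivAt (fun p => H (p / q) / H p)
          ((H' (x / q) * (1 / q) * H x - H (x / q) * H' x) / (H x) ^ 2) x := by
      intro x hx
      have hx1 : x ∈ Set.Ioo (0:ℝ) 1 := ⟨hx.1, lt_trans hx.2 hq1⟩
      have hxq1 : x / q ∈ Set.Ioo (0:ℝ) 1 :=
        ⟨div_pos hx.1 hq0, (div_lt_one hq0).mpr hx.2⟩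
      have h1 : HasDerivAt (fun p => H (p / q)) (H' (x / q) * (1 / q)) x := by
        have := (hHdiff _ hxq1).comp x ((hasDerivAt_id x).div_const q)
        simpa [Function.comp_def] using this
      exact h1.div (hHdiff _ hx1) (ne_of_gt (hHpos _ hx1))
    apply antitoneOn_of_deriv_nonpos (convex_Ioo 0 q)
    · intro x hx
      exact ((key x hx).continuousAt).continuousWithinAt
    · rw [interior_Ioo]
      intro x hx
      exact ((key x hx).differentiableAt).differentiableWithinAt
    · rw [interior_Ioo]
      intro x hx
      rw [(key x hx).deriv]
      have hx1 : x ∈ Set.Ioo (0:ℝ) 1 := ⟨hx.1, lt_trans hx.2 hq1⟩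
      have hxq1 : x / q ∈ Set.Ioo (0:ℝ) 1 :=
        ⟨div_pos hx.1 hq0, (div_lt_one hq0).mpr hx.2⟩
      have hlt : x ≤ x / q := by
        rw [le_div_iff₀ hq0]; nlinarith [hx.1]
      have hGle : x / q * H' (x / q) / H (x / q) ≤ x * H' x / H x := hG hx1 hxq1 hlt
      have hHx : 0 < H x := hHpos _ hx1
      have hHxq : 0 < H (x / q) := hHpos _ hxq1
      have hnum : H' (x / q) * (1 / q) * H x - H (x / q) * H' x ≤ 0 := by
        rw [div_le_div_iff₀ hHxq hHx] at hGle
        have hxpos : (0:ℝ) < x := hx.1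
        have hq0' : q ≠ 0 := ne_of_gt hq0
        rw [div_mul_eq_mul_div, div_mul_eq_mul_div, div_le_iff₀ hq0] at hGle
        have heq2 : H' (x / q) * (1 / q) * H x - H (x / q) * H' x =
            (x * H' (x / q) * H x - x * H' x * H (x / q) * q) / (x * q) := by
          field_simp
        rw [heq2]
        exact div_nonpos_of_nonpos_of_nonneg (by linarith) (by positivity)
      exact div_nonpos_of_nonpos_of_nonneg hnum (sq_nonneg _)
  · -- (b) → (a)
    intro hb x hx y hy hxy
    rcases eq_or_lt_of_le hxy with rfl | hlt
    · exact le_refl _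
    set q := x / y with hqdef
    have hq : q ∈ Set.Ioo (0:ℝ) 1 :=
      ⟨div_pos hx.1 (lt_trans hx.1 hlt), (div_lt_one (lt_trans hx.1 hlt)).mpr hlt⟩
    have hy0 : (0:ℝ) < y := lt_trans hx.1 hlt
    have hxq : x ∈ Set.Ioo (0:ℝ) q := by
      refine ⟨hx.1, ?_⟩
      rw [hqdef, lt_div_iff₀ hy0]
      nlinarith [hx.1, hy.2]
    have hxdivq : x / q = y := by
      rw [hqdef, div_div_eq_mul_div, mul_comm, mul_div_assoc,
        div_self (ne_of_gt hx.1), mul_one]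
    have hderiv : HasDerivAt (fun p => H (p / q) / H p)
        ((H' (x / q) * (1 / q) * H x - H (x / q) * H' x) / (H x) ^ 2) x := by
      have hxq1 : x / q ∈ Set.Ioo (0:ℝ) 1 := by rw [hxdivq]; exact hy
      have h1 : HasDerivAt (fun p => H (p / q)) (H' (x / q) * (1 / q)) x := by
        have := (hHdiff _ hxq1).comp x ((hasDerivAt_id x).div_const q)
        simpa [Function.comp_def] using this
      exact h1.div (hHdiff _ hx) (ne_of_gt (hHpos _ hx))
    have hd0 : (H' (x / q) * (1 / q) * H x - H (x / q) * H' x) / (H x) ^ 2 ≤ 0 :=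
      antitoneOn_Ioo_deriv_nonpos (hb q hq) hxq hderiv
    have hHx : 0 < H x := hHpos _ hx
    have hHy : 0 < H y := hHpos _ hy
    have hnum : H' y * (1 / q) * H x - H y * H' x ≤ 0 := by
      rw [hxdivq] at hd0
      have heq : H' y * (1 / q) * H x - H y * H' x =
          ((H' y * (1 / q) * H x - H y * H' x) / (H x) ^ 2) * (H x) ^ 2 := by
        field_simp
      rw [heq]
      exact mul_nonpos_of_nonpos_of_nonneg hd0 (sq_nonneg _)
    have hx1q : x * (1 / q) = y := by
      have : x * (1 / q) = x / q := by ring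
      rw [this, hxdivq]
    show y * H' y / H y ≤ x * H' x / H x
    rw [div_le_div_iff₀ hHy hHx]
    have h2 := mul_le_mul_of_nonneg_left
      (by linarith : H' y * (1 / q) * H x ≤ H y * H' x) (le_of_lt hx.1)
    have h3 : y * H' y * H x = x * (H' y * (1 / q) * H x) := by
      rw [← hx1q]; ring
    have h4 : x * H' x * H y = x * (H y * H' x) := by ring
    linarith
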